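/- arXiv:2207.10889 — 13 statements merged into one kernel-verified Lean document; each statement's English description precedes it below -/
import Mathlib

section
/- Let G be a finite simple graph on a vertex set V, and for each vertex u let deg(u) denote its degree and N(u) its set of neighbors. Then Σ_{u ∈ V} (max_{w ∈ N(u)} deg(w)) ≥ Σ_{u ∈ V} deg(u), where the maximum over an empty neighborhood is taken to be 0. -/
theorem stmt_1 {V : Type*} [Fintype V] [DecidableEq V]
    (G : SimpleGraph V) [DecidableRel G.Adj] :
    ∑ u : V, G.degree u ≤
      ∑ u : V, (G.neighborFinset u).sup (fun w => G.degree w) := by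
  -- work in ℚ
  set m : V → ℕ := fun u => (G.neighborFinset u).sup (fun w => G.degree w) with hm
  have main : (∑ u : V, (G.degree u : ℚ)) ≤ ∑ u : V, (m u : ℚ) := by
    set d : V → ℚ := fun u => (G.degree u : ℚ) with hd
    set T : ℚ := ∑ u : V, ∑ w ∈ G.neighborFinset u, d w / d u with hT
    have hdeg_pos : ∀ {u w : V}, w ∈ G.neighborFinset u → 0 < d u := by
      intro u w hw
      have : 0 < G.degree u := by
        rw [← SimpleGraph.card_neighborFinset_eq_degree]
        exact Finset.card_pos.mpr ⟨w, hw⟩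
      simp only [hd]; exact_mod_cast this
    -- symmetry swap
    have hswap : T = ∑ u : V, ∑ w ∈ G.neighborFinset u, d u / d w := by
      rw [hT]
      rw [Finset.sum_comm' (s := Finset.univ) (t := fun u => G.neighborFinset u)
        (t' := Finset.univ) (s' := fun w => G.neighborFinset w)]
      intro u w
      simp [SimpleGraph.mem_neighborFinset, SimpleGraph.adj_comm]
    -- 2 * Σ deg ≤ 2 * T
    have h1 : (∑ u : V, (G.degree u : ℚ)) ≤ T := by
      have h2 : 2 * (∑ u : V, (G.degree u : ℚ)) ≤ 2 * T := by
        have : 2 * T = ∑ u : V, ∑ w ∈ G.neighborFinset u, (d w / d u + d u / d w) := by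
          rw [two_mul]
          nth_rewrite 2 [hswap]
          rw [← Finset.sum_add_distrib]
          congr 1; ext u
          rw [← Finset.sum_add_distrib]
        rw [this]
        have : 2 * (∑ u : V, (G.degree u : ℚ)) =
            ∑ u : V, ∑ _w ∈ G.neighborFinset u, (2 : ℚ) := by
          rw [Finset.mul_sum]
          congr 1; ext u
          rw [Finset.sum_const, SimpleGraph.card_neighborFinset_eq_degree]
          ring
        rw [this]
        apply Finset.sum_le_sum
        intro u _
        apply Finset.sum_le_sum
        intro w hw
        have hu : 0 < d u := hdeg_pos hw
        have hw' : 0 < d w := hdeg_pos (by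
          rw [SimpleGraph.mem_neighborFinset] at hw ⊢
          exact hw.symm)
        rw [div_add_div _ _ hu.ne' hw'.ne', le_div_iff₀ (by positivity)]
        nlinarith [sq_nonneg (d w - d u)]
      linarith
    -- average ≤ max
    have h2 : T ≤ ∑ u : V, (m u : ℚ) := by
      rw [hT]
      apply Finset.sum_le_sum
      intro u _
      rcases Finset.eq_empty_or_nonempty (G.neighborFinset u) with he | hne
      · simp [he, hm]
      · obtain ⟨w, hw⟩ := hne
        have hu : 0 < d u := hdeg_pos hw
        rw [← Finset.sum_div, div_le_iff₀ hu]
        have : ∀ x ∈ G.neighborFinset u, d x ≤ (m u : ℚ) := by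
          intro x hx
          rw [hd, hm]
          exact_mod_cast Nat.cast_le.mpr (Finset.le_sup (f := fun w => G.degree w) hx)
        calc ∑ x ∈ G.neighborFinset u, d x
            ≤ ∑ _x ∈ G.neighborFinset u, (m u : ℚ) :=
              Finset.sum_le_sum this
          _ = (m u : ℚ) * d u := by
              rw [Finset.sum_const, hd]
              simp [SimpleGraph.card_neighborFinset_eq_degree, mul_comm]
    linarith
  rw [hm] at main
  exact_mod_cast main
end

section
/- Let G be a finite simple graph and let U be the set of vertices u such that N(u) is nonempty and deg(u) > deg(w) for every neighbor w of u. Then U is an independent set, and there exists a matching in G that saturates every vertex of U (matching each u ∈ U to a distinct neighbor, necessarily outside U). -/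
theorem stmt_2 {V : Type*} [Fintype V] [DecidableEq V]
    (G : SimpleGraph V) [DecidableRel G.Adj]
    (U : Set V)
    (hU : U = {u : V | (G.neighborSet u).Nonempty ∧
        ∀ w ∈ G.neighborSet u, G.degree w < G.degree u}) :
    U.Pairwise (fun u w => ¬ G.Adj u w) ∧
      ∃ M : G.Subgraph, M.IsMatching ∧ U ⊆ M.verts := by
  classical
  subst hU
  set P : V → Prop := fun u => (G.neighborSet u).Nonempty ∧
      ∀ w ∈ G.neighborSet u, G.degree w < G.degree u with hP
  have hindep : ({u : V | P u}).Pairwise (fun u w => ¬ G.Adj u w) := by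
    intro u hu w hw _ hadj
    exact absurd (hu.2 w hadj) (not_lt.2 (le_of_lt (hw.2 u hadj.symm)))
  refine ⟨hindep, ?_⟩
  -- Hall's condition
  let ι := {u : V // P u}
  let t : ι → Finset V := fun u => G.neighborFinset ↑u
  have hdegpos : ∀ u : ι, 0 < G.degree (↑u : V) := by
    intro u
    rw [G.degree_pos_iff_exists_adj]
    obtain ⟨w, hw⟩ := u.2.1
    exact ⟨w, hw⟩
  have hall : ∀ s : Finset ι, s.card ≤ (s.biUnion t).card := by
    intro s
    set T := s.biUnion t with hT
    have key : (s.card : ℚ) ≤ (T.card : ℚ) := by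
      have hA : ∀ u ∈ s,
          (∑ w ∈ T, if G.Adj ↑u w then ((G.degree (↑u : V) : ℚ))⁻¹ else 0) = 1 := by
        intro u hu
        rw [← Finset.sum_filter]
        have hfil : T.filter (fun w => G.Adj ↑u w) = G.neighborFinset ↑u := by
          ext w
          simp only [Finset.mem_filter, SimpleGraph.mem_neighborFinset]
          constructor
          · rintro ⟨_, h⟩; exact h
          · intro h
            refine ⟨Finset.mem_biUnion.2 ⟨u, hu, ?_⟩, h⟩
            simpa [t, SimpleGraph.mem_neighborFinset] using h
        rw [hfil, Finset.sum_const, SimpleGraph.card_neighborFinset_eq_degree,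
          nsmul_eq_mul]
        exact mul_inv_cancel₀ (by exact_mod_cast (hdegpos u).ne')
      calc (s.card : ℚ)
          = ∑ u ∈ s, (1 : ℚ) := by simp
        _ = ∑ u ∈ s, ∑ w ∈ T, (if G.Adj ↑u w then ((G.degree (↑u : V) : ℚ))⁻¹ else 0) := by
            exact Finset.sum_congr rfl fun u hu => (hA u hu).symm
        _ = ∑ w ∈ T, ∑ u ∈ s, (if G.Adj ↑u w then ((G.degree (↑u : V) : ℚ))⁻¹ else 0) :=
            Finset.sum_comm
        _ ≤ ∑ w ∈ T, (1 : ℚ) := by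
            refine Finset.sum_le_sum fun w hw => ?_
            have hwdeg : 0 < G.degree w := by
              rw [G.degree_pos_iff_exists_adj]
              obtain ⟨u, hu, hwu⟩ := Finset.mem_biUnion.1 hw
              exact ⟨↑u, ((SimpleGraph.mem_neighborFinset _ _ _).1 hwu).symm⟩
            calc ∑ u ∈ s, (if G.Adj ↑u w then ((G.degree (↑u : V) : ℚ))⁻¹ else 0)
                ≤ ∑ u ∈ s, (if G.Adj ↑u w then ((G.degree w : ℚ))⁻¹ else 0) := by
                  refine Finset.sum_le_sum fun u hu => ?_
                  by_cases h : G.Adj ↑u w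
                  · simp only [h, if_true]
                    have hlt : G.degree w < G.degree (↑u : V) := u.2.2 w h
                    exact inv_anti₀ (by exact_mod_cast hwdeg) (by exact_mod_cast hlt.le)
                  · simp [h]
              _ = ((Finset.filter (fun a : ι => G.Adj (↑a : V) w) s).card : ℚ) * ((G.degree w : ℚ))⁻¹ := by
                  rw [← Finset.sum_filter, Finset.sum_const, nsmul_eq_mul]
              _ ≤ ((G.degree w : ℚ)) * ((G.degree w : ℚ))⁻¹ := by
                  refine mul_le_mul_of_nonneg_right ?_ (by positivity)
                  have hcard : (Finset.filter (fun a : ι => G.Adj (↑a : V) w) s).card ≤ G.degree w := by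
                    rw [← SimpleGraph.card_neighborFinset_eq_degree]
                    refine Finset.card_le_card_of_injOn (fun (u : ι) => (u : V)) ?_ ?_
                    · intro u hu
                      rw [Finset.mem_coe, SimpleGraph.mem_neighborFinset]
                      exact ((Finset.mem_filter.1 hu).2).symm
                    · intro a _ b _ hab
                      exact Subtype.ext hab
                  exact_mod_cast hcard
              _ = 1 := mul_inv_cancel₀ (by exact_mod_cast hwdeg.ne')
        _ = (T.card : ℚ) := by simp
    exact_mod_cast key
  obtain ⟨f, hfinj, hf⟩ := (Finset.all_card_le_biUnion_card_iff_exists_injective t).1 hall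
  have hadjf : ∀ u : ι, G.Adj ↑u (f u) := fun u =>
    (SimpleGraph.mem_neighborFinset _ _ _).1 (hf u)
  have hfU : ∀ u : ι, ¬ P (f u) := by
    intro u hPf
    exact hindep u.2 hPf (G.ne_of_adj (hadjf u)) (hadjf u)
  refine ⟨{
    verts := {u : V | P u} ∪ Set.range (fun u : ι => f u)
    Adj := fun a b => (∃ u : ι, a = ↑u ∧ b = f u) ∨ (∃ u : ι, a = f u ∧ b = ↑u)
    adj_sub := by
      rintro a b (⟨u, rfl, rfl⟩ | ⟨u, rfl, rfl⟩)
      · exact hadjf u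
      · exact (hadjf u).symm
    edge_vert := by
      rintro a b (⟨u, rfl, rfl⟩ | ⟨u, rfl, rfl⟩)
      · exact Or.inl u.2
      · exact Or.inr ⟨u, rfl⟩
    symm := by
      constructor
      rintro a b (⟨u, rfl, rfl⟩ | ⟨u, rfl, rfl⟩)
      · exact Or.inr ⟨u, rfl, rfl⟩
      · exact Or.inl ⟨u, rfl, rfl⟩ }, ?_, ?_⟩
  · rintro v (hv | ⟨u, rfl⟩)
    · refine ⟨f ⟨v, hv⟩, Or.inl ⟨⟨v, hv⟩, rfl, rfl⟩, ?_⟩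
      rintro w (⟨u', hv', rfl⟩ | ⟨u', hv', rfl⟩)
      · have : u' = ⟨v, hv⟩ := Subtype.ext hv'.symm
        rw [this]
      · have hv'' : v = f u' := hv'
        exact absurd (hv'' ▸ hv) (hfU u')
    · refine ⟨↑u, Or.inr ⟨u, rfl, rfl⟩, ?_⟩
      rintro w (⟨u', hv', rfl⟩ | ⟨u', hv', rfl⟩)
      · have hv'' : f u = ↑u' := hv'
        exact (hfU u (by rw [hv'']; exact u'.2)).elim
      · rw [hfinj hv']
  · exact fun v hv => Or.inl hv
end

section
/- Let G be a finite simple triangle-free graph with vertex set V and edge set E. Let F be the set of unordered pairs {u,w} of distinct vertices that are not adjacent in G but have a common neighbor. Then |F| + |V| ≥ |E|. -/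
open Finset

private def auxH {V : Type*} (G : SimpleGraph V) : SimpleGraph V where
  Adj u w := u ≠ w ∧ ¬ G.Adj u w ∧ ∃ v, G.Adj u v ∧ G.Adj v w
  symm := by
    constructor
    rintro u w ⟨h1, h2, v, hv1, hv2⟩
    exact ⟨h1.symm, fun h => h2 h.symm, v, hv2.symm, hv1.symm⟩
  loopless := by constructor; rintro u ⟨h1, _⟩; exact h1 rfl

theorem stmt_3 {V : Type*} [Fintype V] [DecidableEq V]
    (G : SimpleGraph V) [DecidableRel G.Adj]
    (hG : G.CliqueFree 3)
    (F : Set (Sym2 V))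
    (hF : F = {e : Sym2 V | ∃ u w : V, e = s(u, w) ∧ u ≠ w ∧ ¬ G.Adj u w ∧
        ∃ v : V, G.Adj u v ∧ G.Adj v w}) :
    G.edgeFinset.card ≤ F.ncard + Fintype.card V := by
  classical
  set H : SimpleGraph V := auxH G with hH
  have hFH : F = H.edgeSet := by
    rw [hF]
    ext e
    induction e using Sym2.ind with
    | _ a b =>
      simp only [Set.mem_setOf_eq, SimpleGraph.mem_edgeSet]
      constructor
      · rintro ⟨u, w, he, h1, h2, v, hv1, hv2⟩
        rw [Sym2.eq_iff] at he
        rcases he with ⟨rfl, rfl⟩ | ⟨rfl, rfl⟩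
        · exact ⟨h1, h2, v, hv1, hv2⟩
        · exact ⟨h1.symm, fun h => h2 h.symm, v, hv2.symm, hv1.symm⟩
      · rintro h
        exact ⟨a, b, rfl, h.1, h.2.1, h.2.2⟩
  -- key: for any neighbor u of v, deg_G u ≤ deg_H v + 1
  have hdeg : ∀ v u : V, G.Adj v u → G.degree u ≤ H.degree v + 1 := by
    intro v u hvu
    have hsub : (G.neighborFinset u).erase v ⊆ H.neighborFinset v := by
      intro w hw
      rw [Finset.mem_erase] at hw
      rw [SimpleGraph.mem_neighborFinset] at hw ⊢
      obtain ⟨hwv, hadj⟩ := hw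
      refine ⟨fun h => hwv (h.symm), ?_, u, hvu, hadj⟩
      intro hvw
      exact hG {v, u, w} (SimpleGraph.is3Clique_triple_iff.mpr ⟨hvu, hvw, hadj⟩)
    have hmem : v ∈ G.neighborFinset u := by
      rw [SimpleGraph.mem_neighborFinset]; exact hvu.symm
    have h1 : ((G.neighborFinset u).erase v).card + 1 = G.degree u := by
      rw [Finset.card_erase_add_one hmem, SimpleGraph.card_neighborFinset_eq_degree]
    have h2 : ((G.neighborFinset u).erase v).card ≤ H.degree v := by
      rw [← SimpleGraph.card_neighborFinset_eq_degree]
      exact Finset.card_le_card hsub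
    omega
  -- rational degree sums
  set D : V → ℚ := fun v => (G.degree v : ℚ) with hD
  set S : ℚ := ∑ v, ∑ u ∈ G.neighborFinset v, D u / D v with hS
  have hDpos : ∀ {v u : V}, G.Adj v u → 0 < D v := by
    intro v u h
    have h0 : 0 < G.degree v := by
      rw [← SimpleGraph.card_neighborFinset_eq_degree]
      exact Finset.card_pos.mpr ⟨u, (SimpleGraph.mem_neighborFinset _ _ _).mpr h⟩
    simp only [hD]
    exact_mod_cast h0
  have hswap : S = ∑ v, ∑ u ∈ G.neighborFinset v, D v / D u := by
    rw [hS]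
    exact Finset.sum_comm' (fun x y => by
      simp only [Finset.mem_univ, true_and, and_true, SimpleGraph.mem_neighborFinset]
      exact G.adj_comm x y)
  have hstep1 : ∑ v, D v ≤ S := by
    have h2S : 2 * (∑ v, D v) ≤ 2 * S := by
      have : 2 * S = ∑ v, ∑ u ∈ G.neighborFinset v, (D u / D v + D v / D u) := by
        rw [two_mul]; nth_rewrite 2 [hswap]
        rw [← Finset.sum_add_distrib]
        congr 1; ext v; rw [← Finset.sum_add_distrib]
      rw [this]
      have hlhs : 2 * (∑ v, D v) = ∑ v, ∑ _u ∈ G.neighborFinset v, (2 : ℚ) := by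
        rw [Finset.mul_sum]
        congr 1; ext v
        rw [Finset.sum_const, SimpleGraph.card_neighborFinset_eq_degree]
        push_cast [hD]; ring
      rw [hlhs]
      apply Finset.sum_le_sum
      intro v _
      apply Finset.sum_le_sum
      intro u hu
      rw [SimpleGraph.mem_neighborFinset] at hu
      have hv : 0 < D v := hDpos hu
      have hu' : 0 < D u := hDpos hu.symm
      rw [div_add_div _ _ (ne_of_gt hv) (ne_of_gt hu'), le_div_iff₀ (by positivity)]
      nlinarith [sq_nonneg (D u - D v)]
    linarith
  have hstep2 : S ≤ ∑ v, ((H.degree v : ℚ) + 1) := by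
    rw [hS]
    apply Finset.sum_le_sum
    intro v _
    by_cases hne : (G.neighborFinset v).Nonempty
    · obtain ⟨u, hu⟩ := hne
      rw [SimpleGraph.mem_neighborFinset] at hu
      have hv : 0 < D v := hDpos hu
      rw [← Finset.sum_div, div_le_iff₀ hv]
      calc ∑ u ∈ G.neighborFinset v, D u
          ≤ ∑ _u ∈ G.neighborFinset v, ((H.degree v : ℚ) + 1) := by
            apply Finset.sum_le_sum
            intro w hw
            rw [SimpleGraph.mem_neighborFinset] at hw
            have := hdeg v w hw
            rw [hD]
            push_cast
            exact_mod_cast this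
        _ = ((H.degree v : ℚ) + 1) * D v := by
            rw [Finset.sum_const, SimpleGraph.card_neighborFinset_eq_degree]
            push_cast [hD]; ring
    · rw [Finset.not_nonempty_iff_eq_empty] at hne
      rw [hne, Finset.sum_empty]
      positivity
  have hE : (2 * G.edgeFinset.card : ℚ) = ∑ v, D v := by
    rw [hD]
    beta_reduce
    exact_mod_cast congrArg (Nat.cast : ℕ → ℚ) G.sum_degrees_eq_twice_card_edges.symm
  have hFcard : F.ncard = H.edgeFinset.card := by
    rw [hFH, SimpleGraph.edgeFinset_card, ← Nat.card_eq_fintype_card,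
      Nat.card_coe_set_eq]
  have hHdeg : ∑ v, ((H.degree v : ℚ) + 1)
      = 2 * (H.edgeFinset.card : ℚ) + (Fintype.card V : ℚ) := by
    rw [Finset.sum_add_distrib, Finset.sum_const, Finset.card_univ, nsmul_eq_mul, mul_one]
    congr 1
    exact_mod_cast congrArg (Nat.cast : ℕ → ℚ) H.sum_degrees_eq_twice_card_edges
  have hVnn : (0 : ℚ) ≤ (Fintype.card V : ℚ) := by positivity
  have hfin : (G.edgeFinset.card : ℚ) ≤ ((H.edgeFinset.card : ℚ) + (Fintype.card V : ℚ)) := by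
    linarith
  rw [hFcard]
  exact_mod_cast hfin
end

section
/- For all real numbers X, Y, Z with 0 ≤ X ≤ 1, 0 ≤ Y ≤ 1, 0 ≤ Z ≤ 1: X + Y + Z + 2√(XY) + 2√(XZ) + 2√(YZ) ≤ 2√X + 2√Y + 2√Z + Z√(XY) + Y√(XZ) + X√(YZ). -/
theorem stmt_6 (X Y Z : ℝ)
    (hX : 0 ≤ X) (hX1 : X ≤ 1) (hY : 0 ≤ Y) (hY1 : Y ≤ 1) (hZ : 0 ≤ Z) (hZ1 : Z ≤ 1) :
    X + Y + Z + 2 * Real.sqrt (X * Y) + 2 * Real.sqrt (X * Z) + 2 * Real.sqrt (Y * Z) ≤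
      2 * Real.sqrt X + 2 * Real.sqrt Y + 2 * Real.sqrt Z +
        Z * Real.sqrt (X * Y) + Y * Real.sqrt (X * Z) + X * Real.sqrt (Y * Z) := by
  set a := Real.sqrt X with ha
  set b := Real.sqrt Y with hb
  set c := Real.sqrt Z with hc
  have ha0 : 0 ≤ a := Real.sqrt_nonneg X
  have hb0 : 0 ≤ b := Real.sqrt_nonneg Y
  have hc0 : 0 ≤ c := Real.sqrt_nonneg Z
  have ha1 : a ≤ 1 := by rw [ha]; simpa using Real.sqrt_le_sqrt hX1
  have hb1 : b ≤ 1 := by rw [hb]; simpa using Real.sqrt_le_sqrt hY1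
  have hc1 : c ≤ 1 := by rw [hc]; simpa using Real.sqrt_le_sqrt hZ1
  have hXa : X = a ^ 2 := by rw [ha, Real.sq_sqrt hX]
  have hYb : Y = b ^ 2 := by rw [hb, Real.sq_sqrt hY]
  have hZc : Z = c ^ 2 := by rw [hc, Real.sq_sqrt hZ]
  have hxy : Real.sqrt (X * Y) = a * b := by rw [ha, hb, Real.sqrt_mul hX]
  have hxz : Real.sqrt (X * Z) = a * c := by rw [ha, hc, Real.sqrt_mul hX]
  have hyz : Real.sqrt (Y * Z) = b * c := by rw [hb, hc, Real.sqrt_mul hY]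
  rw [hxy, hxz, hyz, hXa, hYb, hZc]
  nlinarith [mul_nonneg (mul_nonneg ha0 hb0) hc0,
    mul_nonneg (add_nonneg (add_nonneg ha0 hb0) hc0)
      (add_nonneg (mul_nonneg (sub_nonneg.2 ha1) (sub_nonneg.2 (mul_le_one₀ hb1 hc0 hc1)))
        (mul_nonneg (sub_nonneg.2 hb1) (sub_nonneg.2 hc1)))]
end

section
/- For all real numbers X, Y, Z with 0 ≤ X ≤ 1, 0 ≤ Y ≤ 1, 0 ≤ Z ≤ 1: √X + √Y + √Z ≤ 2 + √(XYZ). -/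
theorem stmt_7 (X Y Z : ℝ)
    (hX : 0 ≤ X) (hX1 : X ≤ 1) (hY : 0 ≤ Y) (hY1 : Y ≤ 1) (hZ : 0 ≤ Z) (hZ1 : Z ≤ 1) :
    Real.sqrt X + Real.sqrt Y + Real.sqrt Z ≤ 2 + Real.sqrt (X * Y * Z) := by
  have hsx := Real.sqrt_nonneg X
  have hsy := Real.sqrt_nonneg Y
  have hsz := Real.sqrt_nonneg Z
  have hx1 : Real.sqrt X ≤ 1 := by simpa using Real.sqrt_le_sqrt hX1
  have hy1 : Real.sqrt Y ≤ 1 := by simpa using Real.sqrt_le_sqrt hY1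
  have hz1 : Real.sqrt Z ≤ 1 := by simpa using Real.sqrt_le_sqrt hZ1
  have hm : Real.sqrt (X * Y * Z) = Real.sqrt X * Real.sqrt Y * Real.sqrt Z := by
    rw [Real.sqrt_mul (by positivity), Real.sqrt_mul hX]
  rw [hm]
  nlinarith [mul_nonneg (sub_nonneg.2 hx1) (sub_nonneg.2 hy1),
    mul_nonneg (mul_nonneg (sub_nonneg.2 hx1) (sub_nonneg.2 hy1)) hsz,
    mul_nonneg (sub_nonneg.2 hz1) (sub_nonneg.2 hy1)]
end

section
/- Let X, Y, Z be real numbers in [0,1] satisfying the triangle inequalities X ≤ Y + Z, Y ≤ X + Z, and Z ≤ X + Y. Then 2 − 2√(YZ) + X(√Y + √Z − 2) ≤ (3/2)·[2 − Y − Z + X(√Y + √Z − 1)(√(YZ) − 1)]. -/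
set_option maxHeartbeats 1600000 in
private theorem key (X y z : ℝ) (hX : 0 ≤ X) (hX1 : X ≤ 1) (hy0 : 0 ≤ y) (hy1 : y ≤ 1)
    (hz0 : 0 ≤ z) (hz1 : z ≤ 1) (hXYZ : X ≤ y^2 + z^2) (hYXZ : y^2 ≤ X + z^2)
    (hZXY : z^2 ≤ X + y^2) :
    2 - 2 * (y * z) + X * (y + z - 2) ≤
      3 / 2 * (2 - y^2 - z^2 + X * (y + z - 1) * (y * z - 1)) := by
  have hu : (0:ℝ) ≤ 1 - y := by linarith
  have hv : (0:ℝ) ≤ 1 - z := by linarith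
  have hH : 0 ≤ 1 - y*z - (3/2)*(y-z)^2
      + (y-z)^2*(y+z)*((3/2)*y*z*(y+z-1) - (5/2)*(y+z) + 7/2) := by
    nlinarith [(mul_nonneg (mul_nonneg (pow_nonneg hv 1) (pow_nonneg hy0 3)) (pow_nonneg hz0 2)),
      (mul_nonneg (pow_nonneg hv 2) (pow_nonneg hz0 4)),
      (mul_nonneg (pow_nonneg hv 4) (pow_nonneg hy0 2)),
      (mul_nonneg (pow_nonneg hv 5) (pow_nonneg hz0 1)),
      (mul_nonneg (pow_nonneg hu 1) (pow_nonneg hy0 3)),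
      (mul_nonneg (mul_nonneg (pow_nonneg hu 1) (pow_nonneg hv 1)) (pow_nonneg hz0 2)),
      (mul_nonneg (mul_nonneg (pow_nonneg hu 1) (pow_nonneg hv 1)) (pow_nonneg hz0 4)),
      (mul_nonneg (mul_nonneg (mul_nonneg (pow_nonneg hu 1) (pow_nonneg hv 1)) (pow_nonneg hy0 1)) (pow_nonneg hz0 1)),
      (mul_nonneg (mul_nonneg (mul_nonneg (pow_nonneg hu 1) (pow_nonneg hv 1)) (pow_nonneg hy0 1)) (pow_nonneg hz0 2)),
      (mul_nonneg (mul_nonneg (pow_nonneg hu 1) (pow_nonneg hv 1)) (pow_nonneg hy0 4)),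
      (mul_nonneg (mul_nonneg (pow_nonneg hu 1) (pow_nonneg hv 2)) (pow_nonneg hz0 2)),
      (mul_nonneg (mul_nonneg (mul_nonneg (pow_nonneg hu 1) (pow_nonneg hv 2)) (pow_nonneg hy0 1)) (pow_nonneg hz0 2)),
      (mul_nonneg (mul_nonneg (pow_nonneg hu 1) (pow_nonneg hv 2)) (pow_nonneg hy0 2)),
      (mul_nonneg (mul_nonneg (mul_nonneg (pow_nonneg hu 1) (pow_nonneg hv 2)) (pow_nonneg hy0 2)) (pow_nonneg hz0 1)),
      (mul_nonneg (pow_nonneg hu 2) (pow_nonneg hy0 3)),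
      (mul_nonneg (pow_nonneg hu 2) (pow_nonneg hv 1)),
      (mul_nonneg (mul_nonneg (pow_nonneg hu 2) (pow_nonneg hv 1)) (pow_nonneg hy0 1)),
      (mul_nonneg (mul_nonneg (mul_nonneg (pow_nonneg hu 2) (pow_nonneg hv 1)) (pow_nonneg hy0 1)) (pow_nonneg hz0 1)),
      (pow_nonneg hu 3)]
  rcases le_or_gt 0 ((3/2)*y*z*(y+z-1) - (5/2)*(y+z) + 7/2) with hC | hC
  · have l1 : (0:ℝ) ≤ 1 + y - z := by linarith
    have l2 : (0:ℝ) ≤ 1 + z - y := by linarith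
    nlinarith [hH, mul_nonneg (mul_nonneg l1 hC) (sub_nonneg.2 hYXZ),
      mul_nonneg (mul_nonneg l2 hC) (sub_nonneg.2 hZXY)]
  · have h1 : X * ((3/2)*y*z*(y+z-1) - (5/2)*(y+z) + 7/2) ≥ 1 * ((3/2)*y*z*(y+z-1) - (5/2)*(y+z) + 7/2) := by
      nlinarith [mul_nonneg (sub_nonneg.2 hX1) (le_of_lt (neg_pos.2 hC))]
    nlinarith [h1, sq_nonneg (y-z), mul_nonneg hu hv,
      mul_nonneg (mul_nonneg hu hv) (mul_nonneg hy0 hz0),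
      mul_nonneg hu hu, mul_nonneg hy0 hz0,
      mul_nonneg (mul_nonneg hu hv) (add_nonneg hy0 hz0)]

theorem stmt_8 (X Y Z : ℝ)
    (hX : 0 ≤ X) (hX1 : X ≤ 1) (hY : 0 ≤ Y) (hY1 : Y ≤ 1) (hZ : 0 ≤ Z) (hZ1 : Z ≤ 1)
    (hXYZ : X ≤ Y + Z) (hYXZ : Y ≤ X + Z) (hZXY : Z ≤ X + Y) :
    2 - 2 * Real.sqrt (Y * Z) + X * (Real.sqrt Y + Real.sqrt Z - 2) ≤
      (3 / 2) * (2 - Y - Z +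
        X * (Real.sqrt Y + Real.sqrt Z - 1) * (Real.sqrt (Y * Z) - 1)) := by
  set y := Real.sqrt Y with hy
  set z := Real.sqrt Z with hz
  have hyz : Real.sqrt (Y * Z) = y * z := Real.sqrt_mul hY Z
  have hy2 : y ^ 2 = Y := Real.sq_sqrt hY
  have hz2 : z ^ 2 = Z := Real.sq_sqrt hZ
  have hy0 : 0 ≤ y := Real.sqrt_nonneg Y
  have hz0 : 0 ≤ z := Real.sqrt_nonneg Z
  have hy1' : y ≤ 1 := by rw [hy]; simpa using Real.sqrt_le_sqrt hY1
  have hz1' : z ≤ 1 := by rw [hz]; simpa using Real.sqrt_le_sqrt hZ1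
  rw [hyz]
  clear_value y z
  rw [← hy2, ← hz2] at hXYZ hYXZ hZXY ⊢
  exact key X y z hX hX1 hy0 hy1' hz0 hz1' hXYZ hYXZ hZXY
end

section
/- Let X, Y, Z be real numbers in [0,1] with Y ≤ Z, Z ≤ X + Y, and √Y + √Z ≤ 1. Then 2 − 2√(YZ) + X(√Y + √Z − 2) ≤ 2 − Y − Z + X(√Y + √Z − 1)(√(YZ) − 1). -/
theorem stmt_9 (X Y Z : ℝ)
    (hX : 0 ≤ X) (hX1 : X ≤ 1) (hY : 0 ≤ Y) (hY1 : Y ≤ 1) (hZ : 0 ≤ Z) (hZ1 : Z ≤ 1)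
    (hYZ : Y ≤ Z) (hZXY : Z ≤ X + Y)
    (hsqrt : Real.sqrt Y + Real.sqrt Z ≤ 1) :
    2 - 2 * Real.sqrt (Y * Z) + X * (Real.sqrt Y + Real.sqrt Z - 2) ≤
      2 - Y - Z + X * (Real.sqrt Y + Real.sqrt Z - 1) * (Real.sqrt (Y * Z) - 1) := by
  have hmul : Real.sqrt (Y * Z) = Real.sqrt Y * Real.sqrt Z := Real.sqrt_mul hY Z
  set y := Real.sqrt Y with hy
  set z := Real.sqrt Z with hz
  have hy0 : 0 ≤ y := Real.sqrt_nonneg Y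
  have hz0 : 0 ≤ z := Real.sqrt_nonneg Z
  have hy2 : y * y = Y := Real.mul_self_sqrt hY
  have hz2 : z * z = Z := Real.mul_self_sqrt hZ
  have hyz : y ≤ z := Real.sqrt_le_sqrt hYZ
  have hdiff : (z - y) * (z - y) ≤ X := by
    have h1 : (z - y) * (z - y) ≤ (z - y) * (z + y) := by nlinarith
    nlinarith
  rw [hmul]
  nlinarith [mul_nonneg hy0 hz0, mul_le_one₀ hY1 hz0 (by nlinarith : z ≤ 1),
    mul_nonneg hX (mul_nonneg hy0 hz0)]
end

section
/- For all real numbers Y ∈ (0,1] and X ∈ [0, 1 − Y]: X(11 + 3Y) − X/√Y + 8√Y − 12√(X + Y) < 0. -/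
theorem stmt_11 (X Y : ℝ) (hY0 : 0 < Y) (hY1 : Y ≤ 1)
    (hX0 : 0 ≤ X) (hX1 : X ≤ 1 - Y) :
    X * (11 + 3 * Y) - X / Real.sqrt Y + 8 * Real.sqrt Y - 12 * Real.sqrt (X + Y) < 0 := by
  set s := Real.sqrt Y with hs_def
  have hs0 : 0 < s := Real.sqrt_pos.mpr hY0
  have hs2 : s ^ 2 = Y := Real.sq_sqrt hY0.le
  have hs1 : s ≤ 1 := by
    rw [hs_def, show (1:ℝ) = Real.sqrt 1 by simp]
    exact Real.sqrt_le_sqrt hY1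
  have h1s : (0:ℝ) < 1 + s := by linarith
  -- chord bound: sqrt (X+Y) ≥ s + X/(1+s)
  have hchord : s + X / (1 + s) ≤ Real.sqrt (X + Y) := by
    have hnn : 0 ≤ s + X / (1 + s) := by positivity
    rw [Real.le_sqrt hnn (by linarith)]
    have hexp : (s + X / (1 + s)) ^ 2 = s ^ 2 + X - X * (1 - s ^ 2 - X) / (1 + s) ^ 2 := by
      field_simp
      ring
    have hnum : 0 ≤ X * (1 - s ^ 2 - X) / (1 + s) ^ 2 := by
      apply div_nonneg _ (by positivity)
      exact mul_nonneg hX0 (by rw [hs2]; linarith)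
    rw [hexp, hs2]
    rw [hs2] at hnum
    linarith
  have hu : X / s * s = X := div_mul_cancel₀ X hs0.ne'
  have hv : X / (1 + s) * (1 + s) = X := div_mul_cancel₀ X h1s.ne'
  have hX1' : X ≤ 1 - s ^ 2 := by rw [hs2]; exact hX1
  -- quintic inequality
  have hquint : 3 * s ^ 5 + 8 * s ^ 3 + 1 + s - 9 * s ^ 2 > 0 := by
    nlinarith [sq_nonneg (s - 1), sq_nonneg (2 * s - 1), sq_nonneg (3 * s - 1),
      mul_nonneg hs0.le (sq_nonneg (s - 1)), pow_pos hs0 3, pow_pos hs0 5,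
      mul_nonneg (mul_nonneg hs0.le hs0.le) (sq_nonneg (s - 1)),
      mul_nonneg (mul_nonneg (mul_nonneg hs0.le hs0.le) hs0.le) (sq_nonneg (s - 1))]
  have key : X * (11 + 3 * Y) - X / s + 8 * s - 12 * (s + X / (1 + s)) < 0 := by
    set A := X * (11 + 3 * Y) - X / s + 8 * s - 12 * (s + X / (1 + s)) with hA
    have hsp : 0 < s * (1 + s) := mul_pos hs0 h1s
    set c : ℝ := s * (1 + s) * (11 + 3 * s ^ 2) - (1 + s) - 12 * s with hc
    have hE : A * (s * (1 + s)) = X * c - 4 * s ^ 2 * (1 + s) := by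
      rw [hA, hc, ← hs2]
      field_simp
      ring
    have hE0 : A * (s * (1 + s)) < 0 := by
      rw [hE]
      rcases le_or_gt c 0 with hcle | hcgt
      · nlinarith [mul_nonpos_of_nonneg_of_nonpos hX0 hcle, mul_pos (mul_pos hs0 hs0) h1s]
      · have h1 : X * c ≤ (1 - s ^ 2) * c := by
          exact mul_le_mul_of_nonneg_right hX1' hcgt.le
        nlinarith [mul_pos h1s (show 0 < 3 * s ^ 5 + 8 * s ^ 3 + 1 + s - 9 * s ^ 2 from hquint)]
    by_contra h
    push_neg at h
    nlinarith [mul_nonneg h hsp.le]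
  linarith
end

section
/- Let x, y, z, p, q be nonnegative real numbers with x + y + z + p + q = 1. Set X = x + p, Y = y + p, Z = z + p, and C = 1 − Z. Then p + √C·(2X + 2Y − 2) + (1 − X) + (1 − Y) ≤ 2·[Z·(X + Y − p) + (1 − Y)(1 − (1 − X)√C) + (1 − X)(1 − (1 − Y)√C)]. -/
set_option maxHeartbeats 1000000 in
private theorem key_12 (x y p s : ℝ) (hx : 0 ≤ x) (hy : 0 ≤ y) (hp : 0 ≤ p)
    (hs0 : 0 ≤ s) (hs1 : s ≤ 1) (hq : x + y ≤ s^2) (hz : p ≤ 1 - s^2) :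
    0 ≤ 2*(1-s^2)*(x+y+p) + (1-x-p) + (1-y-p) - p
      - 4*s*(1-x-p)*(1-y-p) + 2*s*((1-x-p)+(1-y-p)-1) := by
  nlinarith [sq_nonneg (x - y), sq_nonneg (1 - s), mul_nonneg hx hy,
    mul_nonneg (sub_nonneg.2 hs1) (sub_nonneg.2 hs1),
    mul_nonneg hs0 (sq_nonneg (x - y)),
    mul_nonneg (sub_nonneg.2 hs1) hp, mul_nonneg hs0 hp,
    mul_nonneg (mul_nonneg hs0 hp) (sub_nonneg.2 hs1),
    mul_nonneg (sub_nonneg.2 hs1) (sub_nonneg.2 hq),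
    mul_nonneg hs0 (sub_nonneg.2 hq), mul_nonneg hs0 (sub_nonneg.2 hz),
    sq_nonneg (x + y + p), sq_nonneg (x + y - 2*p)]

theorem stmt_12 (x y z p q : ℝ)
    (hx : 0 ≤ x) (hy : 0 ≤ y) (hz : 0 ≤ z) (hp : 0 ≤ p) (hq : 0 ≤ q)
    (hsum : x + y + z + p + q = 1)
    (X Y Z C : ℝ)
    (hX : X = x + p) (hY : Y = y + p) (hZ : Z = z + p) (hC : C = 1 - Z) :
    p + Real.sqrt C * (2 * X + 2 * Y - 2) + (1 - X) + (1 - Y) ≤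
      2 * (Z * (X + Y - p) +
        (1 - Y) * (1 - (1 - X) * Real.sqrt C) +
        (1 - X) * (1 - (1 - Y) * Real.sqrt C)) := by
  have hCv : C = x + y + q := by rw [hC, hZ]; linarith
  have hC0 : 0 ≤ C := by rw [hCv]; linarith
  have hC1 : C ≤ 1 := by rw [hCv]; linarith
  set s := Real.sqrt C with hsdef
  have hs0 : 0 ≤ s := Real.sqrt_nonneg C
  have hs2 : s ^ 2 = C := Real.sq_sqrt hC0
  have hs1 : s ≤ 1 := by nlinarith [hs2, hC1, hs0]
  have hq' : x + y ≤ s ^ 2 := by rw [hs2, hCv]; linarith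
  have hz' : p ≤ 1 - s ^ 2 := by rw [hs2, hCv]; linarith
  have hkey := key_12 x y p s hx hy hp hs0 hs1 hq' hz'
  have hZs : Z = 1 - s ^ 2 := by rw [hs2, hC]; ring
  subst hX hY hC
  rw [hZs] at *
  nlinarith [hkey]
end

section
/- For every real number p with 0 ≤ p ≤ 1: 1 − (1 − p)^{5/2} − 2p·√(1 − p) ≥ 0. Equivalently, 2p√(1 − p) + 1 ≤ 2·(1 − (1 − p)²·√(1 − p)/2). -/
theorem stmt_13 (p : ℝ) (hp : 0 ≤ p) (hp1 : p ≤ 1) :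
    1 - (1 - p) ^ ((5 : ℝ) / 2) - 2 * p * Real.sqrt (1 - p) ≥ 0 ∧
    2 * p * Real.sqrt (1 - p) + 1 ≤
      2 * (1 - (1 - p) ^ 2 * Real.sqrt (1 - p) / 2) := by
  have h1p : (0:ℝ) ≤ 1 - p := by linarith
  set s := Real.sqrt (1 - p) with hs
  have hs2 : s ^ 2 = 1 - p := Real.sq_sqrt h1p
  have hs0 : 0 ≤ s := Real.sqrt_nonneg _
  have hs1 : s ≤ 1 := by nlinarith
  have hr : (1 - p) ^ ((5 : ℝ) / 2) = s ^ (5:ℕ) := by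
    rw [hs, Real.sqrt_eq_rpow, ← Real.rpow_natCast _ 5, ← Real.rpow_mul h1p]
    norm_num
  constructor
  · rw [hr]
    nlinarith [sq_nonneg (1 - s), sq_nonneg s, sq_nonneg (s^2 - s), sq_nonneg (s^2 + s - 1)]
  · have hp' : p = 1 - s ^ 2 := by linarith
    rw [hp']
    nlinarith [sq_nonneg (1 - s), sq_nonneg (s^2 - s), sq_nonneg (s^2 + s - 1)]
end

section
/- For every real number p with 0 ≤ p ≤ 1: √(1 − p)·(4p − 2) + 2 − p ≤ 1.76·(p² + 2 − 2p − 2(1 − p)²·√(1 − p)). -/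
theorem stmt_14 (p : ℝ) (hp : 0 ≤ p) (hp1 : p ≤ 1) :
    Real.sqrt (1 - p) * (4 * p - 2) + 2 - p ≤
      1.76 * (p ^ 2 + 2 - 2 * p - 2 * (1 - p) ^ 2 * Real.sqrt (1 - p)) := by
  set s := Real.sqrt (1 - p) with hs
  have h0 : (0:ℝ) ≤ s := Real.sqrt_nonneg _
  have hs2 : s ^ 2 = 1 - p := Real.sq_sqrt (by linarith)
  have h1 : s ≤ 1 := by nlinarith
  have key : 88 * s ^ 4 + 44 * s ^ 3 - 56 * s ^ 2 - 31 * s + 19 ≥ 0 := by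
    nlinarith [sq_nonneg (s - 0.535), sq_nonneg (s * (s - 0.535)),
      sq_nonneg (s ^ 2 - 0.286), mul_nonneg h0 (sq_nonneg (s - 0.535)),
      mul_nonneg (mul_nonneg h0 h0) (sq_nonneg (s - 0.535))]
  have hp' : p = 1 - s ^ 2 := by linarith
  rw [hp']
  nlinarith [mul_nonneg (by linarith : (0:ℝ) ≤ 1 - s) key]
end

section
/- Let x, y, z be real numbers with 0 ≤ x ≤ 0.1, 0 ≤ y ≤ 0.1, 0 ≤ z ≤ 0.1, satisfying the triangle inequalities x ≤ y + z, y ≤ x + z, z ≤ x + y. Then 20(x² + y² + z²) − 200(x²y² + y²z² + z²x²) ≤ 1.9·[x(1 − 100y²z²) + y(1 − 100x²z²) + z(1 − 100x²y²)]. -/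
set_option maxHeartbeats 1000000

theorem stmt_15 (x y z : ℝ)
    (hx0 : 0 ≤ x) (hx1 : x ≤ 0.1) (hy0 : 0 ≤ y) (hy1 : y ≤ 0.1)
    (hz0 : 0 ≤ z) (hz1 : z ≤ 0.1)
    (hxyz : x ≤ y + z) (hyxz : y ≤ x + z) (hzxy : z ≤ x + y) :
    20 * (x ^ 2 + y ^ 2 + z ^ 2) -
        200 * (x ^ 2 * y ^ 2 + y ^ 2 * z ^ 2 + z ^ 2 * x ^ 2) ≤
      1.9 * (x * (1 - 100 * y ^ 2 * z ^ 2) + y * (1 - 100 * x ^ 2 * z ^ 2) +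
        z * (1 - 100 * x ^ 2 * y ^ 2)) := by
  have hK : 0 ≤ 1.9*(x+y+z) - 20*(x^2+y^2+z^2)
      + 200*(x^2*y^2+y^2*z^2+z^2*x^2) - 5.7*(x*y*z) := by
    nlinarith [mul_nonneg (mul_nonneg (sub_nonneg.2 hx1) hx0) (sub_nonneg.2 hxyz),
      mul_nonneg (mul_nonneg (sub_nonneg.2 hy1) hy0) (sub_nonneg.2 hyxz),
      mul_nonneg (mul_nonneg (sub_nonneg.2 hz1) hz0) (sub_nonneg.2 hzxy),
      mul_nonneg (mul_nonneg hx0 hy0) hz0, sq_nonneg (x-y), sq_nonneg (y-z), sq_nonneg (x-z),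
      mul_nonneg (sub_nonneg.2 hx1) (sub_nonneg.2 hy1),
      mul_nonneg (sub_nonneg.2 hy1) (sub_nonneg.2 hz1),
      mul_nonneg (sub_nonneg.2 hx1) (sub_nonneg.2 hz1)]
  have hp : x*y*z*(x*y+y*z+z*x) ≤ 0.03*(x*y*z) := by
    have hxyz0 : 0 ≤ x*y*z := mul_nonneg (mul_nonneg hx0 hy0) hz0
    nlinarith [mul_nonneg hx0 hy0, mul_nonneg hy0 hz0, mul_nonneg hx0 hz0,
      mul_le_mul hx1 hy1 hy0 (by norm_num), mul_le_mul hy1 hz1 hz0 (by norm_num),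
      mul_le_mul hx1 hz1 hz0 (by norm_num)]
  nlinarith [hK, hp]
end

section
/- For every real number z with 0 ≤ z ≤ 0.2: 2√z − 10·z^{5/2} + 1.01 ≤ 1.9·(z·(1 − 0.1·√z) + 0.99·(1 − z)). -/
theorem stmt_19 (z : ℝ) (hz0 : 0 ≤ z) (hz1 : z ≤ 0.2) :
    2 * Real.sqrt z - 10 * z ^ ((5 : ℝ) / 2) + 1.01 ≤
      1.9 * (z * (1 - 0.1 * Real.sqrt z) + 0.99 * (1 - z)) := by
  have hrw : z ^ ((5 : ℝ) / 2) = (Real.sqrt z) ^ (5 : ℕ) := by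
    rw [Real.sqrt_eq_rpow, ← Real.rpow_natCast (z ^ ((1:ℝ)/2)) 5,
      ← Real.rpow_mul hz0]
    norm_num
  rw [hrw]
  set s := Real.sqrt z with hs
  have hs0 : 0 ≤ s := Real.sqrt_nonneg z
  have hsq : s ^ 2 = z := Real.sq_sqrt hz0
  nlinarith [sq_nonneg (s - 0.4), sq_nonneg s, sq_nonneg (s - 1), sq_nonneg (s*s - 0.2), mul_nonneg hs0 hs0, sq_nonneg (s^2 - 0.2*s)]
end
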